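/- Let D = (V, A) be a finite simple directed graph that is acyclic (a DAG). Then there exists a happy directed temporal graph realizing D: a directed graph G' on V together with an injective labeling λ assigning each arc of G' exactly one label, such that the (strict) reachability relation of (G', λ) equals A. Concretely, taking G' = D and labeling arcs so that along every directed path of length ≥ 2 labels strictly decrease (e.g., processing vertices in reverse topological order, giving the out-arcs of the i-th vertex distinct labels in the range (i·n, i·n + n]) yields such a realization. -/
import Mathlib


/-- Strict temporal reachability: `SReach lab u v t` means there is a walk from `u` to `v`
whose steps carry strictly increasing labels, arriving at time `t`. -/
inductive SReach {V : Type*} (lab : V → V → Finset ℕ) : V → V → ℕ → Prop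
  | single {u v : V} {t : ℕ} (h : t ∈ lab u v) : SReach lab u v t
  | cons {u v w : V} {t t' : ℕ} (h : SReach lab u v t) (h' : t' ∈ lab v w) (hlt : t < t') :
      SReach lab u w t'

/-- `u` can reach `v` via a strict temporal path. -/
def StrictReachable {V : Type*} (lab : V → V → Finset ℕ) (u v : V) : Prop :=
  ∃ t, SReach lab u v t

/-- Non-strict temporal reachability: labels are non-decreasing along the walk. -/
inductive NSReach {V : Type*} (lab : V → V → Finset ℕ) : V → V → ℕ → Prop
  | single {u v : V} {t : ℕ} (h : t ∈ lab u v) : NSReach lab u v t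
  | cons {u v w : V} {t t' : ℕ} (h : NSReach lab u v t) (h' : t' ∈ lab v w) (hle : t ≤ t') :
      NSReach lab u w t'

/-- `u` can reach `v` via a non-strict temporal path. -/
def NonStrictReachable {V : Type*} (lab : V → V → Finset ℕ) (u v : V) : Prop :=
  ∃ t, NSReach lab u v t

/-- Every finite DAG is the strict reachability graph of a happy directed temporal graph:
each arc gets exactly one label, non-arcs none, all labels are distinct, and the
strict reachability relation is exactly the arc relation. -/
theorem stmt4 {V : Type*} [Fintype V] (A : V → V → Prop)
    (hirr : ∀ x, ¬ A x x)
    (hacyc : ∀ x, ¬ Relation.TransGen A x x) :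
    ∃ lab : V → V → Finset ℕ,
      (∀ u v, A u v → ∃ t, lab u v = {t}) ∧
      (∀ u v, ¬ A u v → lab u v = ∅) ∧
      (∀ u v x y t, t ∈ lab u v → t ∈ lab x y → u = x ∧ v = y) ∧
      (∀ u v, A u v ↔ u ≠ v ∧ StrictReachable lab u v) := by
  classical
  cases isEmpty_or_nonempty V with
  | inl hE =>
    refine ⟨fun _ _ => ∅, ?_, ?_, ?_, ?_⟩ <;> intro u <;> exact hE.elim u
  | inr hNE =>
  set n := Fintype.card V with hn_def
  have hn : 0 < n := Fintype.card_pos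
  let e := Fintype.equivFin V
  let f : V → ℕ := fun u => (e u : ℕ)
  have hf : ∀ u, f u < n := fun u => (e u).isLt
  have hfinj : Function.Injective f := fun a b hab => e.injective (Fin.ext hab)
  let S : V → Finset V := fun u => Finset.univ.filter (fun x => Relation.TransGen A u x)
  let h : V → ℕ := fun u => (S u).card
  have hS : ∀ u v, A u v → h v < h u := by
    intro u v huv
    apply Finset.card_lt_card
    constructor
    · intro x hx
      simp only [S, Finset.mem_filter, Finset.mem_univ, true_and] at hx ⊢
      exact Relation.TransGen.head huv hx
    · intro hsub
      have hv : v ∈ S u := by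
        simp only [S, Finset.mem_filter, Finset.mem_univ, true_and]
        exact Relation.TransGen.single huv
      have := hsub hv
      simp only [S, Finset.mem_filter, Finset.mem_univ, true_and] at this
      exact hacyc v this
  let key : V → ℕ := fun u => n * h u + f u
  have hkey : ∀ u v, A u v → key v < key u := by
    intro u v huv
    have h1 : h v + 1 ≤ h u := hS u v huv
    have hfv := hf v
    calc n * h v + f v < n * h v + n := by omega
      _ = n * (h v + 1) := by ring
      _ ≤ n * h u := Nat.mul_le_mul_left n h1
      _ ≤ n * h u + f u := Nat.le_add_right _ _
  let L : V → V → ℕ := fun u v => n * key u + f v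
  have hdecomp : ∀ a b c d : ℕ, b < n → d < n → n * a + b = n * c + d → a = c ∧ b = d := by
    intro a b c d hb hd heq
    have ha : (n * a + b) / n = a := by
      rw [Nat.mul_add_div hn, Nat.div_eq_of_lt hb, add_zero]
    have hc : (n * c + d) / n = c := by
      rw [Nat.mul_add_div hn, Nat.div_eq_of_lt hd, add_zero]
    have hb' : (n * a + b) % n = b := by
      rw [Nat.mul_add_mod, Nat.mod_eq_of_lt hb]
    have hd' : (n * c + d) % n = d := by
      rw [Nat.mul_add_mod, Nat.mod_eq_of_lt hd]
    constructor
    · rw [← ha, ← hc, heq]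
    · rw [← hb', ← hd', heq]
  have hLinj : ∀ u v x y, L u v = L x y → u = x ∧ v = y := by
    intro u v x y heq
    obtain ⟨hk, hfv⟩ := hdecomp _ _ _ _ (hf v) (hf y) heq
    obtain ⟨hh, hfu⟩ := hdecomp _ _ _ _ (hf u) (hf x) hk
    exact ⟨hfinj hfu, hfinj hfv⟩
  have hdrop : ∀ u v w, A u v → A v w → L v w < L u v := by
    intro u v w huv hvw
    have h1 : key v + 1 ≤ key u := hkey u v huv
    have hfw := hf w
    calc n * key v + f w < n * key v + n := by omega
      _ = n * (key v + 1) := by ring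
      _ ≤ n * key u := Nat.mul_le_mul_left n h1
      _ ≤ n * key u + f v := Nat.le_add_right _ _
  let lab : V → V → Finset ℕ := fun u v => if A u v then {L u v} else ∅
  have hmem : ∀ u v t, t ∈ lab u v ↔ A u v ∧ t = L u v := by
    intro u v t
    simp only [lab]
    split
    · simp [*]
    · simp [*]
  have hcollapse : ∀ u v t, SReach lab u v t → t ∈ lab u v := by
    intro u v t hr
    induction hr with
    | single h => exact h
    | cons h h' hlt ih =>
      obtain ⟨hab, ht1⟩ := (hmem _ _ _).mp ih
      obtain ⟨hbc, ht2⟩ := (hmem _ _ _).mp h'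
      have := hdrop _ _ _ hab hbc
      omega
  refine ⟨lab, ?_, ?_, ?_, ?_⟩
  · intro u v huv
    exact ⟨L u v, by simp [lab, huv]⟩
  · intro u v huv
    simp [lab, huv]
  · intro u v x y t ht ht'
    obtain ⟨_, h1⟩ := (hmem _ _ _).mp ht
    obtain ⟨_, h2⟩ := (hmem _ _ _).mp ht'
    exact hLinj u v x y (h1 ▸ h2)
  · intro u v
    constructor
    · intro huv
      refine ⟨?_, L u v, SReach.single ((hmem _ _ _).mpr ⟨huv, rfl⟩)⟩
      rintro rfl
      exact hirr u huv
    · rintro ⟨hne, t, hr⟩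
      exact ((hmem _ _ _).mp (hcollapse u v t hr)).1
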